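/- Let J ⊆ K[x_1,…,x_m] be an ideal generated by binomials containing no binomial of the form x^u − 1 with u ≠ 0. If rad(J) = rad((F_1,…,F_s)) for some polynomials F_1,…,F_s ∈ J, then for every indispensable monomial M of J whose support is minimal (under inclusion) among the supports of indispensable monials of J, there exist an index l ∈ {1,…,s} and a monomial N occurring with nonzero coefficient in F_l such that supp(N) = supp(M). -/

import Mathlib

open MvPolynomial

noncomputable section


/-- A binomial is a difference of two monomials `x^u − x^v`. -/
def IsBinomial {K : Type*} [Field K] {m : ℕ} (f : MvPolynomial (Fin m) K) : Prop :=
  ∃ u v : Fin m →₀ ℕ, f = monomial u (1 : K) - monomial v 1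

/-- A monomial `x^u` is an indispensable monomial of `J` if every set of binomials
generating `J` contains a binomial having `x^u` as one of its two monomials. -/
def IsIndispensableMonomial {K : Type*} [Field K] {m : ℕ}
    (J : Ideal (MvPolynomial (Fin m) K)) (u : Fin m →₀ ℕ) : Prop :=
  ∀ S : Set (MvPolynomial (Fin m) K), (∀ f ∈ S, IsBinomial f) → Ideal.span S = J →
    ∃ v : Fin m →₀ ℕ,
      (monomial u (1 : K) - monomial v 1) ∈ S ∨ (monomial v (1 : K) - monomial u 1) ∈ S

namespace StmtAux

variable {K : Type*} [Field K] {m : ℕ}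

/-- The additive congruence on exponent vectors induced by a binomial ideal. -/
def relCon (J : Ideal (MvPolynomial (Fin m) K)) : AddCon (Fin m →₀ ℕ) where
  r a b := (monomial a (1 : K) - monomial b 1) ∈ J
  iseqv := by
    refine ⟨fun a => by simp, fun {a b} h => ?_, fun {a b c} h1 h2 => ?_⟩
    · have := J.neg_mem h
      rwa [neg_sub] at this
    · have := J.add_mem h1 h2
      rwa [sub_add_sub_cancel] at this
  add' := by
    intro a b c d h1 h2
    have h3 : monomial c (1 : K) * (monomial a 1 - monomial b 1) ∈ J := J.mul_mem_left _ h1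
    have h4 : monomial b (1 : K) * (monomial c 1 - monomial d 1) ∈ J := J.mul_mem_left _ h2
    have h5 := J.add_mem h3 h4
    have heq : monomial (a + c) (1 : K) - monomial (b + d) 1 =
        monomial c (1 : K) * (monomial a 1 - monomial b 1) +
          monomial b (1 : K) * (monomial c 1 - monomial d 1) := by
      rw [mul_sub, mul_sub, monomial_mul, monomial_mul, monomial_mul, monomial_mul]
      rw [add_comm c a, add_comm c b, add_comm b d]
      ring_nf
    show (monomial (a + c) (1 : K) - monomial (b + d) 1) ∈ J
    rwa [heq]

lemma relCon_iff (J : Ideal (MvPolynomial (Fin m) K)) (a b : Fin m →₀ ℕ) :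
    relCon J a b ↔ (monomial a (1 : K) - monomial b 1) ∈ J := Iff.rfl

/-- the induced ring hom to the monoid algebra over the quotient monoid -/
def qmap (c : AddCon (Fin m →₀ ℕ)) :
    MvPolynomial (Fin m) K →+* AddMonoidAlgebra K c.Quotient :=
  AddMonoidAlgebra.mapDomainRingHom K (AddCon.mk' c)

lemma qmap_monomial (c : AddCon (Fin m →₀ ℕ)) (a : Fin m →₀ ℕ) (r : K) :
    qmap c (monomial a r) = AddMonoidAlgebra.single (AddCon.mk' c a) r := by
  show AddMonoidAlgebra.mapDomain _ _ = _
  rw [← single_eq_monomial]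
  exact AddMonoidAlgebra.mapDomain_single

open scoped Classical in
lemma qmap_coeff (c : AddCon (Fin m →₀ ℕ)) (f : MvPolynomial (Fin m) K) (t : c.Quotient) :
    (qmap c f).coeff t = ∑ w ∈ f.support, if AddCon.mk' c w = t then f.coeff w else 0 := by
  show Finsupp.mapDomain _ (AddMonoidAlgebra.coeff f) t = _
  rw [Finsupp.mapDomain, Finsupp.sum_apply, Finsupp.sum]
  refine Finset.sum_congr rfl fun w hw => ?_
  rw [Finsupp.single_apply]
  rfl

lemma mk'_eq_of (c : AddCon (Fin m →₀ ℕ)) {a b : Fin m →₀ ℕ} (hab : c a b) :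
    AddCon.mk' c a = AddCon.mk' c b := Quotient.sound' hab

lemma of_mk'_eq (c : AddCon (Fin m →₀ ℕ)) {a b : Fin m →₀ ℕ}
    (h : AddCon.mk' c a = AddCon.mk' c b) : c a b := Quotient.exact' h

lemma span_le_ker (c : AddCon (Fin m →₀ ℕ)) (S : Set (MvPolynomial (Fin m) K))
    (h : ∀ f ∈ S, ∃ a b, f = monomial a (1 : K) - monomial b 1 ∧ c a b) :
    Ideal.span S ≤ RingHom.ker (qmap c) := by
  rw [Ideal.span_le]
  intro f hf
  obtain ⟨a, b, rfl, hab⟩ := h f hf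
  have := mk'_eq_of c hab
  simp only [SetLike.mem_coe, RingHom.mem_ker, map_sub, qmap_monomial, this, sub_self]

lemma qmap_binomial_eq_zero_iff (c : AddCon (Fin m →₀ ℕ)) (a b : Fin m →₀ ℕ) (h : a ≠ b)
    (hz : qmap (K := K) c (monomial a 1 - monomial b 1) = 0) : c a b := by
  rw [map_sub, qmap_monomial, qmap_monomial, sub_eq_zero] at hz
  rcases (Finsupp.single_eq_single_iff _ _ _ _).1 (congrArg AddMonoidAlgebra.coeff hz) with ⟨h1, -⟩ | ⟨h1, -⟩
  · exact of_mk'_eq c h1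
  · exact absurd h1 one_ne_zero


lemma rel_zero {J : Ideal (MvPolynomial (Fin m) K)}
    (hno : ∀ w : Fin m →₀ ℕ, w ≠ 0 → (monomial w (1 : K) - 1) ∉ J)
    {q : Fin m →₀ ℕ} (h : relCon J 0 q) : q = 0 := by
  by_contra hq
  have h0 : (monomial (0 : Fin m →₀ ℕ) (1 : K) - monomial q 1) ∈ J := h
  have := J.neg_mem h0
  rw [neg_sub] at this
  simp only [monomial_zero', C_1] at this
  exact hno q hq this

lemma criterion {J : Ideal (MvPolynomial (Fin m) K)}
    (hno : ∀ w : Fin m →₀ ℕ, w ≠ 0 → (monomial w (1 : K) - 1) ∉ J)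
    {w : Fin m →₀ ℕ}
    (hex : ∃ z, z ≠ w ∧ relCon J w z)
    (hdec : ∀ c a b : Fin m →₀ ℕ, w = c + a → relCon J a b → a ≠ b → c = 0) :
    IsIndispensableMonomial J w := by
  intro S hSbin hSspan
  classical
  set R₀ : (Fin m →₀ ℕ) → (Fin m →₀ ℕ) → Prop :=
    fun a b => (monomial a (1 : K) - monomial b 1) ∈ S with hR₀
  set c := addConGen R₀ with hc
  have hle : ∀ a b, c a b → relCon J a b := by
    intro a b hab
    exact AddCon.addConGen_le.2 (fun x y hxy => (relCon_iff J x y).2 (hSspan ▸ Ideal.subset_span hxy)) hab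
  obtain ⟨z, hzw, hwz⟩ := hex
  have hker : Ideal.span S ≤ RingHom.ker (qmap c) := by
    refine span_le_ker _ _ (fun f hf => ?_)
    obtain ⟨a, b, rfl⟩ := hSbin f hf
    exact ⟨a, b, rfl, AddConGen.Rel.of a b hf⟩
  have hcz : c w z := by
    have hmem : (monomial w (1 : K) - monomial z 1) ∈ Ideal.span S := by
      rw [hSspan]; exact hwz
    exact qmap_binomial_eq_zero_iff c w z (fun h => hzw h.symm) (hker hmem)
  have key : ∀ x y : Fin m →₀ ℕ, AddConGen.Rel R₀ x y →
      ((x = w → y = w ∨ ∃ v, (monomial w (1 : K) - monomial v 1) ∈ S ∨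
          (monomial v (1 : K) - monomial w 1) ∈ S) ∧
       (y = w → x = w ∨ ∃ v, (monomial w (1 : K) - monomial v 1) ∈ S ∨
          (monomial v (1 : K) - monomial w 1) ∈ S)) := by
    intro x y hxy
    induction hxy with
    | of a b hab =>
        exact ⟨fun hx => Or.inr ⟨b, Or.inl (hx ▸ hab)⟩,
               fun hy => Or.inr ⟨a, Or.inr (hy ▸ hab)⟩⟩
    | refl a => exact ⟨fun h => Or.inl h, fun h => Or.inl h⟩
    | symm _ ih => exact ⟨ih.2, ih.1⟩
    | trans _ _ ih1 ih2 =>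
        refine ⟨fun hx => ?_, fun hz => ?_⟩
        · rcases ih1.1 hx with h | g
          · exact ih2.1 h
          · exact Or.inr g
        · rcases ih2.2 hz with h | g
          · exact ih1.2 h
          · exact Or.inr g
    | add h1 h2 ih1 ih2 =>
        rename_i p p' q q'
        have hp : relCon J p p' := hle _ _ h1
        have hq : relCon J q q' := hle _ _ h2
        refine ⟨fun h => ?_, fun h => ?_⟩
        · by_cases hpp : p = p'
          · by_cases hqq : q = q'
            · exact Or.inl (by rw [← hpp, ← hqq]; exact h)
            · have hp0 : p = 0 := hdec p q q' h.symm hq hqq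
              have hqw : q = w := by rwa [hp0, zero_add] at h
              rcases ih2.1 hqw with hq'w | g
              · exact Or.inl (by rw [← hpp, hp0, hq'w, zero_add])
              · exact Or.inr g
          · have hq0 : q = 0 := hdec q p p' (by rw [add_comm] at h; exact h.symm) hp hpp
            have hpw : p = w := by rwa [hq0, add_zero] at h
            rcases ih1.1 hpw with hp'w | g
            · have hq'0 : q' = 0 := rel_zero hno (by rw [← hq0]; exact hq)
              exact Or.inl (by rw [hp'w, hq'0, add_zero])
            · exact Or.inr g
        · by_cases hpp : p' = p
          · by_cases hqq : q' = q
            · exact Or.inl (by rw [← hpp, ← hqq]; exact h)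
            · have hp0 : p' = 0 := hdec p' q' q h.symm
                ((relCon J).symm hq) hqq
              have hqw : q' = w := by rwa [hp0, zero_add] at h
              rcases ih2.2 hqw with hq'w | g
              · exact Or.inl (by rw [← hpp, hp0, hq'w, zero_add])
              · exact Or.inr g
          · have hq0 : q' = 0 := hdec q' p' p (by rw [add_comm] at h; exact h.symm)
              ((relCon J).symm hp) hpp
            have hpw : p' = w := by rwa [hq0, add_zero] at h
            rcases ih1.2 hpw with hp'w | g
            · have hq'0 : q = 0 := rel_zero hno (by rw [← hq0]; exact (relCon J).symm hq)
              exact Or.inl (by rw [hp'w, hq'0, add_zero])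
            · exact Or.inr g
  rcases (key w z hcz).1 rfl with h | g
  · exact absurd h hzw
  · exact g

/-- total degree of an exponent vector -/
def deg (a : Fin m →₀ ℕ) : ℕ := a.sum fun _ k => k

lemma deg_add (a b : Fin m →₀ ℕ) : deg (a + b) = deg a + deg b :=
  Finsupp.sum_add_index' (fun _ => rfl) (fun _ _ _ => rfl)

lemma deg_eq_zero {a : Fin m →₀ ℕ} (h : deg a = 0) : a = 0 := by
  rw [deg, Finsupp.sum] at h
  ext i
  by_cases hi : i ∈ a.support
  · exact Finset.sum_eq_zero_iff.1 h i hi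
  · simpa [Finsupp.notMem_support_iff] using hi

lemma support_add_right (c p : Fin m →₀ ℕ) : p.support ⊆ (c + p).support := by
  intro i hi
  rw [Finsupp.mem_support_iff] at hi ⊢
  rw [Finsupp.add_apply]
  omega

lemma support_add_subset_iff {p q : Fin m →₀ ℕ} {σ : Finset (Fin m)} :
    (p + q).support ⊆ σ ↔ p.support ⊆ σ ∧ q.support ⊆ σ := by
  constructor
  · intro h
    refine ⟨Finset.Subset.trans ?_ h, Finset.Subset.trans (support_add_right p q) h⟩
    rw [add_comm]
    exact support_add_right q p
  · intro ⟨h1, h2⟩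
    exact Finset.Subset.trans Finsupp.support_add (Finset.union_subset h1 h2)

lemma lemE {J : Ideal (MvPolynomial (Fin m) K)}
    (hno : ∀ w : Fin m →₀ ℕ, w ≠ 0 → (monomial w (1 : K) - 1) ∉ J) {σ : Finset (Fin m)}
    (hmin : ∀ w : Fin m →₀ ℕ, IsIndispensableMonomial J w → w.support ⊆ σ → w.support = σ) :
    ∀ n : ℕ, ∀ a b : Fin m →₀ ℕ, deg a ≤ n → relCon J a b → a ≠ b →
      a.support ⊆ σ → a.support ≠ σ → False := by
  intro n
  induction n with
  | zero =>
      intro a b hdeg hrel hab _ _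
      have ha : a = 0 := deg_eq_zero (Nat.le_zero.1 hdeg)
      subst ha
      exact hab (rel_zero hno hrel).symm
  | succ n ih =>
      intro a b hdeg hrel hab hsub hne
      by_cases ha0 : a = 0
      · subst ha0
        exact hab (rel_zero hno hrel).symm
      · have hind : IsIndispensableMonomial J a := by
          refine criterion hno ⟨b, fun h => hab h.symm, hrel⟩ ?_
          intro c p q hcp hpq hpqne
          by_contra hc0
          have hdc : deg c ≠ 0 := fun h => hc0 (deg_eq_zero h)
          have hdp : deg p ≤ n := by
            have hd := deg_add c p
            rw [← hcp] at hd
            omega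
          have hpsub : p.support ⊆ a.support := by
            rw [hcp]; exact support_add_right c p
          exact ih p q hdp hpq hpqne (hpsub.trans hsub)
            (fun h => hne (Finset.Subset.antisymm hsub (h ▸ hpsub)))
        exact hne (hmin a hind hsub)

lemma lemD {J : Ideal (MvPolynomial (Fin m) K)} {σ : Finset (Fin m)}
    (hE : ∀ a b : Fin m →₀ ℕ, relCon J a b → a ≠ b → a.support ⊆ σ → a.support ≠ σ → False)
    (R' : (Fin m →₀ ℕ) → (Fin m →₀ ℕ) → Prop)
    (hR' : ∀ a b, R' a b → relCon J a b ∧ a.support ≠ σ ∧ b.support ≠ σ) :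
    ∀ x y, AddConGen.Rel R' x y →
      ((x.support ⊆ σ ↔ y.support ⊆ σ) ∧ (x.support ⊆ σ → x = y)) := by
  intro x y hxy
  induction hxy with
  | of a b hab =>
      obtain ⟨hrel, haσ, hbσ⟩ := hR' a b hab
      have h1 : a.support ⊆ σ → a = b := by
        intro hs; by_contra hab'; exact hE a b hrel hab' hs haσ
      have h2 : b.support ⊆ σ → b = a := by
        intro hs; by_contra hab'; exact hE b a ((relCon J).symm hrel) hab' hs hbσ
      exact ⟨⟨fun hs => (h1 hs) ▸ hs, fun hs => (h2 hs) ▸ hs⟩, h1⟩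
  | refl a => exact ⟨Iff.rfl, fun _ => rfl⟩
  | symm h ih => exact ⟨ih.1.symm, fun hs => (ih.2 (ih.1.2 hs)).symm⟩
  | trans h1 h2 ih1 ih2 =>
      exact ⟨ih1.1.trans ih2.1, fun hs => (ih1.2 hs).trans (ih2.2 (ih1.1.1 hs))⟩
  | add h1 h2 ih1 ih2 =>
      rename_i p p' q q'
      refine ⟨⟨fun hs => ?_, fun hs => ?_⟩, fun hs => ?_⟩
      · obtain ⟨hp, hq⟩ := support_add_subset_iff.1 hs
        exact support_add_subset_iff.2 ⟨ih1.1.1 hp, ih2.1.1 hq⟩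
      · obtain ⟨hp, hq⟩ := support_add_subset_iff.1 hs
        exact support_add_subset_iff.2 ⟨ih1.1.2 hp, ih2.1.2 hq⟩
      · obtain ⟨hp, hq⟩ := support_add_subset_iff.1 hs
        rw [ih1.2 hp, ih2.2 hq]

lemma nsmul_support_subset (n : ℕ) (u : Fin m →₀ ℕ) : (n • u).support ⊆ u.support := by
  intro j hj
  rw [Finsupp.mem_support_iff] at hj ⊢
  rw [Finsupp.smul_apply, smul_eq_mul] at hj
  intro h
  rw [h, Nat.mul_zero] at hj
  exact hj rfl

lemma nsmul_cancel {u v : Fin m →₀ ℕ} {n i : ℕ} (hi : i < n)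
    (h : n • u = i • u + (n - i) • v) : u = v := by
  ext j
  have hj := DFunLike.congr_fun h j
  rw [Finsupp.add_apply, Finsupp.smul_apply, Finsupp.smul_apply, Finsupp.smul_apply,
    smul_eq_mul, smul_eq_mul, smul_eq_mul] at hj
  have h2 : (i + (n - i)) * u j = i * u j + (n - i) * v j := by
    rw [Nat.add_sub_cancel' hi.le]; exact hj
  rw [add_mul] at h2
  exact Nat.eq_of_mul_eq_mul_left (Nat.sub_pos_of_lt hi) (Nat.add_left_cancel h2)

open scoped Classical in
lemma single_sub_single_pow (c : AddCon (Fin m →₀ ℕ)) (u v : Fin m →₀ ℕ) (n : ℕ)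
    (hsep : ∀ i, i < n → ¬ c (i • u + (n - i) • v) (n • u)) :
    ((AddMonoidAlgebra.single (AddCon.mk' c u) (1 : K) -
        AddMonoidAlgebra.single (AddCon.mk' c v) (1 : K)) ^ n).coeff (AddCon.mk' c (n • u)) = 1 := by
  set A := AddMonoidAlgebra K c.Quotient with hA
  set X : A := AddMonoidAlgebra.single (AddCon.mk' c u) (1 : K) with hX
  set Y : A := AddMonoidAlgebra.single (AddCon.mk' c v) (1 : K) with hY
  have hterm : ∀ i : ℕ,
      X ^ i * (-Y) ^ (n - i) * (n.choose i : A) =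
        AddMonoidAlgebra.single (AddCon.mk' c (i • u + (n - i) • v))
          ((n.choose i : K) * (-1) ^ (n - i)) := by
    intro i
    rw [hX, hY]
    rw [show -AddMonoidAlgebra.single (AddCon.mk' c v) (1:K) = AddMonoidAlgebra.single (AddCon.mk' c v) (-1:K) from (AddMonoidAlgebra.single_neg _ _).symm]
    rw [AddMonoidAlgebra.single_pow, AddMonoidAlgebra.single_pow,
      AddMonoidAlgebra.single_mul_single]
    rw [mul_comm _ ((n.choose i : A)), ← nsmul_eq_mul, AddMonoidAlgebra.smul_single]
    rw [map_add, map_nsmul, map_nsmul]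
    congr 1
    rw [one_pow, one_mul]
    rw [nsmul_eq_mul]
  rw [sub_eq_add_neg, add_pow]
  have happ' : ((∑ i ∈ Finset.range (n + 1), X ^ i * (-Y) ^ (n - i) * (n.choose i : A))).coeff
      (AddCon.mk' c (n • u)) =
      ∑ i ∈ Finset.range (n + 1),
        (X ^ i * (-Y) ^ (n - i) * (n.choose i : A)).coeff (AddCon.mk' c (n • u)) := by
    rw [AddMonoidAlgebra.coeff_sum, Finsupp.finset_sum_apply]
  rw [happ']
  have hval : ∀ i ∈ Finset.range (n + 1),
      (X ^ i * (-Y) ^ (n - i) * (n.choose i : A)).coeff (AddCon.mk' c (n • u)) =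
        if i = n then 1 else 0 := by
    intro i hi
    rw [hterm i, AddMonoidAlgebra.coeff_single_apply]
    by_cases hin : i = n
    · subst hin
      rw [if_pos rfl, if_pos]
      · simp
      · rw [Nat.sub_self, zero_smul, add_zero]
    · have hlt : i < n := by
        have := Finset.mem_range.1 hi
        omega
      rw [if_neg, if_neg hin]
      intro heq
      exact hsep i hlt (of_mk'_eq c heq)
  rw [Finset.sum_congr rfl hval, Finset.sum_ite_eq' (Finset.range (n + 1)) n fun _ => (1 : K)]
  rw [if_pos (Finset.self_mem_range_succ n)]

end StmtAux

open StmtAux in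
theorem stmt_0 (K : Type*) [Field K] (m : ℕ) (J : Ideal (MvPolynomial (Fin m) K))
    -- `J` is generated by binomials
    (S₀ : Set (MvPolynomial (Fin m) K)) (hS₀ : ∀ f ∈ S₀, IsBinomial f)
    (hJ : J = Ideal.span S₀)
    -- `J` contains no binomial `x^u − 1` with `u ≠ 0`
    (hno : ∀ u : Fin m →₀ ℕ, u ≠ 0 → (monomial u (1 : K) - 1) ∉ J)
    -- `rad(J) = rad((F_1, …, F_s))` with `F_1, …, F_s ∈ J`
    (s : ℕ) (F : Fin s → MvPolynomial (Fin m) K) (hF : ∀ i, F i ∈ J)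
    (hrad : J.radical = (Ideal.span (Set.range F)).radical
      )
    -- `x^u` is an indispensable monomial of `J` with minimal support
    (u : Fin m →₀ ℕ) (hu : IsIndispensableMonomial J u)
    (humin : ∀ w : Fin m →₀ ℕ, IsIndispensableMonomial J w →
      w.support ⊆ u.support → w.support = u.support) :
    ∃ l : Fin s, ∃ v ∈ (F l).support, v.support = u.support := by
  classical
  have hS₀span : Ideal.span (S₀ \ {0} : Set (MvPolynomial (Fin m) K)) = J := by
    rw [hJ]
    refine le_antisymm (Ideal.span_mono Set.diff_subset) ?_
    rw [Ideal.span_le]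
    intro f hf
    by_cases hf0 : f = (0 : MvPolynomial (Fin m) K)
    · rw [hf0]; exact Submodule.zero_mem _
    · exact Ideal.subset_span ⟨hf, hf0⟩
  obtain ⟨v₀, hv₀⟩ := hu (S₀ \ {0}) (fun f hf => hS₀ f hf.1) hS₀span
  have hne : v₀ ≠ u := by
    rintro rfl
    rcases hv₀ with h | h <;>
      · rw [sub_self] at h
        exact h.2 rfl
  have hrel : relCon J u v₀ := by
    rcases hv₀ with h | h
    · exact (relCon_iff J u v₀).2 (hJ ▸ Ideal.subset_span h.1)
    · exact (relCon J).symm ((relCon_iff J v₀ u).2 (hJ ▸ Ideal.subset_span h.1))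
  by_contra hcon
  push_neg at hcon
  have hE : ∀ a b : Fin m →₀ ℕ, relCon J a b → a ≠ b → a.support ⊆ u.support →
      a.support ≠ u.support → False :=
    fun a b => lemE hno humin (deg a) a b le_rfl
  set R' : (Fin m →₀ ℕ) → (Fin m →₀ ℕ) → Prop := fun a b =>
    relCon J a b ∧ a.support ≠ u.support ∧ b.support ≠ u.support with hR'def
  set c' := addConGen R' with hc'def
  have hR'c : ∀ a b, R' a b → c' a b := fun a b h => AddConGen.Rel.of a b h
  have hc'le : ∀ a b, c' a b → relCon J a b := fun a b h =>
    AddCon.addConGen_le.2 (fun x y hxy => hxy.1) h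
  have hD : ∀ x y, c' x y → x.support ⊆ u.support → x = y := fun x y hxy =>
    (lemD hE R' (fun a b h => h) x y hxy).2
  have hJker : J ≤ RingHom.ker (qmap (relCon J)) := by
    conv_lhs => rw [hJ]
    refine span_le_ker _ _ (fun f hf => ?_)
    obtain ⟨a, b, rfl⟩ := hS₀ f hf
    exact ⟨a, b, rfl, (relCon_iff J a b).2 (hJ ▸ Ideal.subset_span hf)⟩
  have hkill : ∀ l, qmap c' (F l) = 0 := by
    intro l
    have hFzero : qmap (relCon J) (F l) = 0 := hJker (hF l)
    ext t
    rw [qmap_coeff]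
    by_cases hex : ∃ w₀ ∈ (F l).support, AddCon.mk' c' w₀ = t
    · obtain ⟨w₀, hw₀s, hw₀t⟩ := hex
      have hstep : ∀ w ∈ (F l).support,
          (if AddCon.mk' c' w = t then (F l).coeff w else 0) =
            (if AddCon.mk' (relCon J) w = AddCon.mk' (relCon J) w₀ then (F l).coeff w
              else 0) := by
        intro w hw
        refine if_congr ⟨fun h => ?_, fun h => ?_⟩ rfl rfl
        · exact mk'_eq_of _ (hc'le _ _ (of_mk'_eq c' (h.trans hw₀t.symm)))
        · rw [← hw₀t]
          exact mk'_eq_of c' (hR'c _ _ ⟨of_mk'_eq _ h, hcon l w hw, hcon l w₀ hw₀s⟩)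
      rw [Finset.sum_congr rfl hstep,
        ← qmap_coeff (relCon J) (F l) (AddCon.mk' (relCon J) w₀), hFzero]
      simp
    · push_neg at hex
      rw [Finset.sum_eq_zero (fun w hw => if_neg (hex w hw))]
      simp
  have hmemrad : (monomial u (1 : K) - monomial v₀ 1) ∈ (Ideal.span (Set.range F)).radical := by
    rw [← hrad]
    exact Ideal.le_radical hrel
  obtain ⟨n, hn⟩ := Ideal.mem_radical_iff.1 hmemrad
  have hker' : Ideal.span (Set.range F) ≤ RingHom.ker (qmap c') := by
    rw [Ideal.span_le]
    rintro f ⟨l, rfl⟩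
    exact hkill l
  have hzero : qmap c' ((monomial u (1 : K) - monomial v₀ 1) ^ n) = 0 := hker' hn
  rw [map_pow, map_sub, qmap_monomial, qmap_monomial] at hzero
  have hsep : ∀ i, i < n → ¬ c' (i • u + (n - i) • v₀) (n • u) := by
    intro i hi hc
    have hsub : (n • u).support ⊆ u.support := nsmul_support_subset n u
    have := hD (n • u) (i • u + (n - i) • v₀) (c'.symm hc) hsub
    exact hne (nsmul_cancel hi this).symm
  have hone := single_sub_single_pow (K := K) c' u v₀ n hsep
  rw [hzero] at hone
  simpa using hone
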